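/- Let M and N be topological spaces, b ∈ M, r ∈ N, f : M → N a function, and φ : M × M × N → M × M × N a continuous map that is homotopic to the identity map of M × M × N and satisfies φ(x, b, r) = (x, x, f x) for all x ∈ M. Then M is a contractible topological space. -/

import Mathlib

/-- No-cloning theorem for classical phase spaces (topological form): if there is a
continuous map `φ` of `M × M × N`, homotopic to the identity, with
`φ (x, b, r) = (x, x, f x)` for all `x`, then `M` is contractible. -/
theorem no_cloning_contractible
    {M N : Type*} [TopologicalSpace M] [TopologicalSpace N]
    (b : M) (r : N) (f : M → N)
    (φ : C(M × M × N, M × M × N))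
    (hφ : φ.Homotopic (ContinuousMap.id (M × M × N)))
    (hclone : ∀ x : M, φ (x, b, r) = (x, x, f x)) :
    ContractibleSpace M := by
  rw [contractible_iff_id_nullhomotopic]
  refine ⟨b, ?_⟩
  let ι : C(M, M × M × N) := ⟨fun x => (x, b, r), continuous_id.prodMk continuous_const⟩
  let P : C(M × M × N, M) := ⟨fun p => p.2.1, continuous_snd.fst⟩
  have h : ((P.comp φ).comp ι).Homotopic
      ((P.comp (ContinuousMap.id (M × M × N))).comp ι) :=
    ContinuousMap.Homotopic.comp
      ((ContinuousMap.Homotopic.refl P).comp hφ) (ContinuousMap.Homotopic.refl ι)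
  have h1 : (P.comp φ).comp ι = ContinuousMap.id M := by
    ext x
    simp [ι, P, hclone x]
  have h2 : (P.comp (ContinuousMap.id (M × M × N))).comp ι =
      ContinuousMap.const M b := by
    ext x; rfl
  rw [h1, h2] at h
  exact h
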